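/- Sandwich property of the mixed bias: for any δ ∈ [0,1], r > 0, and state s with 1 < |s| < N−1 on the cycle, min{r, 1} ≤ γ_s^δ ≤ max{r, 1}, where r = γ_{s'}^δ is the bias of the single-cluster state s' with |s'| = |s|. -/

import Mathlib

/-- Forward bias of a state on the cycle of `N` individuals with `m` mutants of fitness
`r`, under mixed birth-death/death-birth updating with mixing parameter `δ`
(DB with probability `δ`, BD with probability `1−δ`):
`γ_s^δ = [(1−δ)·r(xA+yA)/(mr+N−m) + δ·(xB + (2r/(1+r))yB)/N]
       / [(1−δ)·(xA+yA)/(mr+N−m) + δ·(xA + (2/(1+r))yA)/N]`. -/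
noncomputable def gammaMix (N m : ℕ) (r δ : ℝ) (xA yA xB yB : ℕ) : ℝ :=
  ((1 - δ) * (r * ((xA : ℝ) + yA)) / (m * r + ((N : ℝ) - m)) +
      δ * ((xB : ℝ) + (2 * r / (1 + r)) * yB) / N) /
  ((1 - δ) * ((xA : ℝ) + yA) / (m * r + ((N : ℝ) - m)) +
      δ * ((xA : ℝ) + (2 / (1 + r)) * yA) / N)



private lemma keyBD_low (xA yA xB yB : ℕ) (r : ℝ) (hr : 0 < r) (hle : r ≤ 1)
    (hcast : (xA:ℝ) + yA = (xB:ℝ) + yB) :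
    r * ((xA:ℝ) + (2/(1+r))*yA) ≤ (xB:ℝ) + (2*r/(1+r))*yB := by
  have h1r : (0:ℝ) < 1 + r := by linarith
  have e1 : r*((xA:ℝ) + (2/(1+r))*yA) = (r*(1+r)*xA + 2*r*yA)/(1+r) := by
    field_simp
  have e2 : (xB:ℝ) + (2*r/(1+r))*yB = ((1+r)*xB + 2*r*yB)/(1+r) := by
    field_simp
  rw [e1, e2]
  gcongr ?_ / _
  nlinarith [mul_nonneg (sub_nonneg.2 hle) (by positivity : (0:ℝ) ≤ r*(xA:ℝ) + xB),
    mul_le_mul_of_nonneg_left hcast.le hr.le, mul_le_mul_of_nonneg_left hcast.ge hr.le]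

private lemma keyBD_high (xA yA xB yB : ℕ) (r : ℝ) (hr : 0 < r) (hge : 1 ≤ r)
    (hcast : (xA:ℝ) + yA = (xB:ℝ) + yB) :
    (xB:ℝ) + (2*r/(1+r))*yB ≤ r * ((xA:ℝ) + (2/(1+r))*yA) := by
  have h1r : (0:ℝ) < 1 + r := by linarith
  have e1 : r*((xA:ℝ) + (2/(1+r))*yA) = (r*(1+r)*xA + 2*r*yA)/(1+r) := by
    field_simp
  have e2 : (xB:ℝ) + (2*r/(1+r))*yB = ((1+r)*xB + 2*r*yB)/(1+r) := by
    field_simp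
  rw [e1, e2]
  gcongr ?_ / _
  nlinarith [mul_nonneg (sub_nonneg.2 hge) (by positivity : (0:ℝ) ≤ r*(xA:ℝ) + xB),
    mul_le_mul_of_nonneg_left hcast.le hr.le, mul_le_mul_of_nonneg_left hcast.ge hr.le]

private lemma keyDB_low (xA yA xB yB : ℕ) (r : ℝ) (hr : 0 < r) (hle : r ≤ 1)
    (hcast : (xA:ℝ) + yA = (xB:ℝ) + yB) :
    (xB:ℝ) + (2*r/(1+r))*yB ≤ (xA:ℝ) + (2/(1+r))*yA := by
  have h1r : (0:ℝ) < 1 + r := by linarith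
  have e1 : (xB:ℝ) + (2*r/(1+r))*yB = ((1+r)*xB + 2*r*yB)/(1+r) := by
    field_simp
  have e2 : (xA:ℝ) + (2/(1+r))*yA = ((1+r)*xA + 2*yA)/(1+r) := by
    field_simp
  rw [e1, e2]
  gcongr ?_ / _
  nlinarith [mul_nonneg (sub_nonneg.2 hle) (by positivity : (0:ℝ) ≤ (yA:ℝ) + yB)]

private lemma keyDB_high (xA yA xB yB : ℕ) (r : ℝ) (hr : 0 < r) (hge : 1 ≤ r)
    (hcast : (xA:ℝ) + yA = (xB:ℝ) + yB) :
    (xA:ℝ) + (2/(1+r))*yA ≤ (xB:ℝ) + (2*r/(1+r))*yB := by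
  have h1r : (0:ℝ) < 1 + r := by linarith
  have e1 : (xB:ℝ) + (2*r/(1+r))*yB = ((1+r)*xB + 2*r*yB)/(1+r) := by
    field_simp
  have e2 : (xA:ℝ) + (2/(1+r))*yA = ((1+r)*xA + 2*yA)/(1+r) := by
    field_simp
  rw [e1, e2]
  gcongr ?_ / _
  nlinarith [mul_nonneg (sub_nonneg.2 hge) (by positivity : (0:ℝ) ≤ (yA:ℝ) + yB)]

/-- Sandwich property of the mixed bias: for any `δ ∈ [0,1]`, `r > 0`, and state with
`1 < m < N−1` mutants on the cycle, `min{r,1} ≤ γ_s^δ ≤ max{r,1}`, where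
`r = γ_{s'}^δ` is the bias of the single-cluster state `s'` (`xA = xB = 0`,
`yA = yB = 1`) with the same number of mutants. -/
theorem mixed_bias_sandwich (N m xA yA xB yB : ℕ) (r δ : ℝ)
    (hr : 0 < r) (hδ0 : 0 ≤ δ) (hδ1 : δ ≤ 1)
    (hm1 : 1 < m) (hm2 : m < N - 1)
    (hclusters : xA + yA = xB + yB) (hcl1 : 1 ≤ xA + yA)
    (hsizeA : xA + 2 * yA ≤ m) (hsizeB : xB + 2 * yB ≤ N - m) :
    (min r 1 ≤ gammaMix N m r δ xA yA xB yB ∧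
      gammaMix N m r δ xA yA xB yB ≤ max r 1) ∧
    gammaMix N m r δ 0 1 0 1 = r := by
  have hNn : m + 2 ≤ N := by omega
  have hmN : (m : ℝ) + 2 ≤ N := by exact_mod_cast hNn
  have hm0 : (0:ℝ) ≤ m := Nat.cast_nonneg m
  have hN : (0:ℝ) < N := by linarith
  have hQ : (0:ℝ) < m * r + ((N:ℝ) - m) := by nlinarith
  have h1r : (0:ℝ) < 1 + r := by linarith
  have hcast : (xA:ℝ) + yA = (xB:ℝ) + yB := by exact_mod_cast hclusters
  have hS1 : (1:ℝ) ≤ (xA:ℝ) + yA := by exact_mod_cast hcl1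
  have hxA : (0:ℝ) ≤ xA := Nat.cast_nonneg xA
  have hyA : (0:ℝ) ≤ yA := Nat.cast_nonneg yA
  have hxB : (0:ℝ) ≤ xB := Nat.cast_nonneg xB
  have hyB : (0:ℝ) ≤ yB := Nat.cast_nonneg yB
  have hupos : (0:ℝ) < 2 / (1 + r) := by positivity
  have hxu : 0 < (xA:ℝ) + (2/(1+r)) * yA := by
    rcases (by omega : 1 ≤ xA ∨ 1 ≤ yA) with h | h
    · have h' : (1:ℝ) ≤ xA := by exact_mod_cast h
      have h'' : 0 ≤ 2/(1+r) * (yA:ℝ) := by positivity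
      linarith
    · have h' : (1:ℝ) ≤ yA := by exact_mod_cast h
      nlinarith
  have hdgen : ∀ X1 X2 : ℝ, 0 < X1 → 0 < X2 →
      0 < (1 - δ) * X1 / (m * r + ((N:ℝ) - m)) + δ * X2 / N := by
    intro X1 X2 h1 h2
    rcases lt_or_eq_of_le hδ1 with h | h
    · have t1 : 0 < (1 - δ) * X1 / (m * r + ((N:ℝ) - m)) :=
        div_pos (mul_pos (by linarith) h1) hQ
      have t2 : 0 ≤ δ * X2 / N := by positivity
      linarith
    · have t1 : 0 ≤ (1 - δ) * X1 / (m * r + ((N:ℝ) - m)) := by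
        rw [← h]; simp
      have t2 : 0 < δ * X2 / N := div_pos (mul_pos (by linarith) h2) hN
      linarith
  have hden : 0 < (1 - δ) * ((xA : ℝ) + yA) / (m * r + ((N : ℝ) - m)) +
      δ * ((xA : ℝ) + (2 / (1 + r)) * yA) / N :=
    hdgen _ _ (by linarith) hxu
  have hdivN : ∀ a b : ℝ, a ≤ b → a / (N:ℝ) ≤ b / (N:ℝ) := by
    intro a b h; gcongr
  have hdivQ : ∀ a b : ℝ, a ≤ b →
      a / (m * r + ((N:ℝ) - m)) ≤ b / (m * r + ((N:ℝ) - m)) := by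
    intro a b h; gcongr
  constructor
  · simp only [gammaMix]
    rcases le_total r 1 with hle | hge
    · rw [min_eq_left hle, max_eq_right hle]
      constructor
      · rw [le_div_iff₀ hden]
        have K1 := keyBD_low xA yA xB yB r hr hle hcast
        have step2 : δ * (r * ((xA:ℝ) + (2/(1+r))*yA)) / N ≤
            δ * ((xB:ℝ) + (2*r/(1+r))*yB) / N :=
          hdivN _ _ (mul_le_mul_of_nonneg_left K1 hδ0)
        have expand : r * ((1 - δ) * ((xA : ℝ) + yA) / (m * r + ((N : ℝ) - m)) +
              δ * ((xA : ℝ) + (2 / (1 + r)) * yA) / N)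
            = (1 - δ) * (r * ((xA : ℝ) + yA)) / (m * r + ((N : ℝ) - m)) +
              δ * (r * ((xA : ℝ) + (2 / (1 + r)) * yA)) / N := by ring
        rw [expand]
        exact add_le_add_right step2 _
      · rw [div_le_one hden]
        have K2 := keyDB_low xA yA xB yB r hr hle hcast
        have s1 : (1 - δ) * (r * ((xA : ℝ) + yA)) / (m * r + ((N : ℝ) - m)) ≤
            (1 - δ) * ((xA : ℝ) + yA) / (m * r + ((N : ℝ) - m)) := by
          apply hdivQ
          apply mul_le_mul_of_nonneg_left _ (by linarith : (0:ℝ) ≤ 1 - δ)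
          nlinarith
        have s2 : δ * ((xB:ℝ) + (2*r/(1+r))*yB) / N ≤
            δ * ((xA:ℝ) + (2/(1+r))*yA) / N :=
          hdivN _ _ (mul_le_mul_of_nonneg_left K2 hδ0)
        exact add_le_add s1 s2
    · rw [min_eq_right hge, max_eq_left hge]
      constructor
      · rw [le_div_iff₀ hden, one_mul]
        have K3 := keyDB_high xA yA xB yB r hr hge hcast
        have s1 : (1 - δ) * ((xA : ℝ) + yA) / (m * r + ((N : ℝ) - m)) ≤
            (1 - δ) * (r * ((xA : ℝ) + yA)) / (m * r + ((N : ℝ) - m)) := by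
          apply hdivQ
          apply mul_le_mul_of_nonneg_left _ (by linarith : (0:ℝ) ≤ 1 - δ)
          nlinarith
        have s2 : δ * ((xA:ℝ) + (2/(1+r))*yA) / N ≤
            δ * ((xB:ℝ) + (2*r/(1+r))*yB) / N :=
          hdivN _ _ (mul_le_mul_of_nonneg_left K3 hδ0)
        exact add_le_add s1 s2
      · rw [div_le_iff₀ hden]
        have K4 := keyBD_high xA yA xB yB r hr hge hcast
        have step2 : δ * ((xB:ℝ) + (2*r/(1+r))*yB) / N ≤
            δ * (r * ((xA:ℝ) + (2/(1+r))*yA)) / N :=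
          hdivN _ _ (mul_le_mul_of_nonneg_left K4 hδ0)
        have expand : r * ((1 - δ) * ((xA : ℝ) + yA) / (m * r + ((N : ℝ) - m)) +
              δ * ((xA : ℝ) + (2 / (1 + r)) * yA) / N)
            = (1 - δ) * (r * ((xA : ℝ) + yA)) / (m * r + ((N : ℝ) - m)) +
              δ * (r * ((xA : ℝ) + (2 / (1 + r)) * yA)) / N := by ring
        rw [expand]
        exact add_le_add_right step2 _
  · simp only [gammaMix]
    push_cast
    have hd : 0 < (1 - δ) * ((0:ℝ) + 1) / (m * r + ((N : ℝ) - m)) +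
        δ * ((0:ℝ) + (2 / (1 + r)) * 1) / N :=
      hdgen _ _ (by norm_num) (by positivity)
    rw [div_eq_iff hd.ne']
    ring
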